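/- For all integers n ≥ 2, the function Ǧ satisfies the recursion of Ĝ; that is, Ǧ_n(w,x,z) = ∑_{k=1}^{n-1} Ǧ_k(w,x,z) · Ǧ_{n-k}(w+kz,x,z) / (1-w-(n-1)x). -/
import Mathlib
set_option maxHeartbeats 1000000


open Finset MvPolynomial

noncomputable section

/-- The field of rational functions in three variables `w, x, z` over `ℚ`. -/
abbrev F3 : Type := FractionRing (MvPolynomial (Fin 3) ℚ)

/-- the variable `w` -/
def W : F3 := algebraMap (MvPolynomial (Fin 3) ℚ) F3 (X 0)
/-- the variable `x` -/
def Xv : F3 := algebraMap (MvPolynomial (Fin 3) ℚ) F3 (X 1)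
/-- the variable `z` -/
def Zv : F3 := algebraMap (MvPolynomial (Fin 3) ℚ) F3 (X 2)

/-- `Ǧ_n(w, x, z)`, defined by `Ǧ_1(w,x,z) = 1/(1-w)` and, for `n ≥ 2`,
`Ǧ_n(w,x,z) = ∑_{k=1}^{n-1} Ǧ_k(w+x,x,z) Ǧ_{n-k}(w+kz,x,z) / (1-w)`. -/
def Gcheck (x z : F3) : ℕ → F3 → F3
  | 0, _ => 0
  | 1, w => 1 / (1 - w)
  | (n + 2), w =>
      ∑ k ∈ (Finset.Icc 1 (n + 1)).attach,
        Gcheck x z k.1 (w + x) * Gcheck x z (n + 2 - k.1) (w + (k.1 : F3) * z) /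
          (1 - w)
  termination_by n _ => n
  decreasing_by
  · have := Finset.mem_Icc.mp k.2; omega
  · have := Finset.mem_Icc.mp k.2; omega

lemma Gcheck_one (w : F3) : Gcheck Xv Zv 1 w = 1 / (1 - w) := by
  simp [Gcheck]

lemma Gcheck_spec (n : ℕ) (hn : 2 ≤ n) (w : F3) :
    Gcheck Xv Zv n w = (∑ k ∈ Finset.Icc 1 (n-1),
      Gcheck Xv Zv k (w + Xv) * Gcheck Xv Zv (n-k) (w + (k:F3)*Zv)) / (1 - w) := by
  obtain ⟨m, rfl⟩ : ∃ m, n = m + 2 := ⟨n - 2, by omega⟩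
  rw [Gcheck]
  rw [Finset.sum_attach (Finset.Icc 1 (m+1))
    (fun k => Gcheck Xv Zv k (w + Xv) * Gcheck Xv Zv (m + 2 - k) (w + (k:F3)*Zv) / (1-w))]
  rw [← Finset.sum_div]
  norm_num

lemma one_sub_ne (a b : ℕ) : (1:F3) - W - (a:F3)*Xv - (b:F3)*Zv ≠ 0 := by
  have h : (1:F3) - W - (a:F3)*Xv - (b:F3)*Zv
      = algebraMap (MvPolynomial (Fin 3) ℚ) F3 (1 - X 0 - (a:ℚ) • X 1 - (b:ℚ) • X 2) := by
    simp [W, Xv, Zv, map_sub, Algebra.smul_def, map_one]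
  rw [h]
  intro hc
  have h0 := (map_eq_zero_iff _ (IsFractionRing.injective (MvPolynomial (Fin 3) ℚ) F3)).mp hc
  have hcoeff := congrArg (MvPolynomial.coeff (Finsupp.single 0 1)) h0
  simp [MvPolynomial.coeff_X', MvPolynomial.coeff_one, Finsupp.single_eq_single_iff,
    Finsupp.single_eq_zero, eq_comm] at hcoeff

def GoodW (w : F3) : Prop := ∃ a b : ℕ, w = W + (a:F3)*Xv + (b:F3)*Zv

lemma goodW_W : GoodW W := ⟨0, 0, by norm_num⟩

lemma GoodW.ne {w : F3} (hw : GoodW w) (m : ℕ) : (1:F3) - w - (m:F3)*Xv ≠ 0 := by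
  obtain ⟨a, b, rfl⟩ := hw
  intro hc
  exact one_sub_ne (a + m) b (by push_cast; linear_combination hc)

lemma GoodW.ne0 {w : F3} (hw : GoodW w) : (1:F3) - w ≠ 0 := by
  have := hw.ne 0; simpa using this

lemma GoodW.addX {w : F3} (hw : GoodW w) : GoodW (w + Xv) := by
  obtain ⟨a, b, rfl⟩ := hw
  exact ⟨a + 1, b, by push_cast; ring⟩

lemma GoodW.addZ {w : F3} (hw : GoodW w) (k : ℕ) : GoodW (w + (k:F3)*Zv) := by
  obtain ⟨a, b, rfl⟩ := hw
  exact ⟨a, b + k, by push_cast; ring⟩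

lemma keyT : ∀ n : ℕ, ∀ w : F3, GoodW w →
    ∑ k ∈ Finset.Icc 1 (n-1),
        (Gcheck Xv Zv k (w+Xv) - Gcheck Xv Zv k w) * Gcheck Xv Zv (n-k) (w + (k:F3)*Zv)
      = ((n-1 : ℕ) : F3) * Xv * Gcheck Xv Zv n w := by
  intro n
  induction n using Nat.strong_induction_on with
  | _ n IH =>
  intro w hw
  match n, IH with
  | 0, _ => simp
  | 1, _ => simp
  | (N+2), IH =>
  set n := N + 2 with hn
  have hn2 : 2 ≤ n := by omega
  have hR2 : ∀ m, 2 ≤ m → m < n → ∀ u : F3, GoodW u →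
      (1 - u - ((m-1:ℕ):F3) * Xv) * Gcheck Xv Zv m u
        = ∑ k ∈ Finset.Icc 1 (m-1), Gcheck Xv Zv k u * Gcheck Xv Zv (m-k) (u + (k:F3)*Zv) := by
    intro m hm hmn u hu
    have h1 : (1 - u) * Gcheck Xv Zv m u
        = ∑ k ∈ Finset.Icc 1 (m-1),
            Gcheck Xv Zv k (u+Xv) * Gcheck Xv Zv (m-k) (u + (k:F3)*Zv) := by
      rw [Gcheck_spec m hm u, mul_comm, div_mul_cancel₀ _ hu.ne0]
    have hT := IH m hmn u hu
    have h2 : ∑ k ∈ Finset.Icc 1 (m-1), Gcheck Xv Zv k u * Gcheck Xv Zv (m-k) (u + (k:F3)*Zv)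
        = (∑ k ∈ Finset.Icc 1 (m-1),
            Gcheck Xv Zv k (u+Xv) * Gcheck Xv Zv (m-k) (u + (k:F3)*Zv))
          - ∑ k ∈ Finset.Icc 1 (m-1),
            (Gcheck Xv Zv k (u+Xv) - Gcheck Xv Zv k u) * Gcheck Xv Zv (m-k) (u + (k:F3)*Zv) := by
      rw [← Finset.sum_sub_distrib]
      exact Finset.sum_congr rfl (fun k _ => by ring)
    rw [h2, ← h1, hT]
    ring
  have hC : ∀ m, 1 ≤ m → m < n → ∀ u : F3, GoodW u →
      (1 - u) * (Gcheck Xv Zv m (u+Xv) - Gcheck Xv Zv m u)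
        = (m:F3) * Xv * Gcheck Xv Zv m (u+Xv)
          + ∑ i ∈ Finset.Icc 1 (m-1), Gcheck Xv Zv i (u+Xv) *
              (Gcheck Xv Zv (m-i) (u + (i:F3)*Zv + Xv) - Gcheck Xv Zv (m-i) (u + (i:F3)*Zv)) := by
    intro m hm hmn u hu
    rcases eq_or_lt_of_le hm with h1 | hm2
    · -- m = 1
      subst h1
      simp only [Gcheck_one]
      have h2 : (1:F3) - (u + Xv) ≠ 0 := by
        have h3 := hu.ne 1
        intro hc; apply h3; push_cast; linear_combination hc
      rw [show Finset.Icc 1 0 = (∅ : Finset ℕ) from rfl, Finset.sum_empty, add_zero,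
        Nat.cast_one, one_mul]
      have h3 := hu.ne0
      field_simp
      ring
    · -- m ≥ 2
      have hm2' : 2 ≤ m := hm2
      have hA : (1 - u) * Gcheck Xv Zv m u
          = ∑ i ∈ Finset.Icc 1 (m-1),
              Gcheck Xv Zv i (u+Xv) * Gcheck Xv Zv (m-i) (u + (i:F3)*Zv) := by
        rw [Gcheck_spec m hm2' u, mul_comm, div_mul_cancel₀ _ hu.ne0]
      have hB := hR2 m hm2' hmn (u + Xv) hu.addX
      have hcast : ((m-1:ℕ):F3) = (m:F3) - 1 := by
        rw [Nat.cast_sub hm, Nat.cast_one]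
      have hBargs : ∀ i ∈ Finset.Icc 1 (m-1),
          Gcheck Xv Zv i (u+Xv) * Gcheck Xv Zv (m-i) (u + Xv + (i:F3)*Zv)
            = Gcheck Xv Zv i (u+Xv) * Gcheck Xv Zv (m-i) (u + (i:F3)*Zv + Xv) := by
        intro i _
        rw [add_right_comm]
      rw [Finset.sum_congr rfl hBargs] at hB
      have hsplit : ∑ i ∈ Finset.Icc 1 (m-1), Gcheck Xv Zv i (u+Xv) *
              (Gcheck Xv Zv (m-i) (u + (i:F3)*Zv + Xv) - Gcheck Xv Zv (m-i) (u + (i:F3)*Zv))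
          = (∑ i ∈ Finset.Icc 1 (m-1),
              Gcheck Xv Zv i (u+Xv) * Gcheck Xv Zv (m-i) (u + (i:F3)*Zv + Xv))
            - ∑ i ∈ Finset.Icc 1 (m-1),
              Gcheck Xv Zv i (u+Xv) * Gcheck Xv Zv (m-i) (u + (i:F3)*Zv) := by
        rw [← Finset.sum_sub_distrib]
        exact Finset.sum_congr rfl (fun i _ => by ring)
      rw [hsplit, ← hB, ← hA, hcast]
      ring
  -- main computation
  refine mul_left_cancel₀ hw.ne0 ?_
  have hspec : (1 - w) * Gcheck Xv Zv n w
      = ∑ k ∈ Finset.Icc 1 (n-1),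
          Gcheck Xv Zv k (w+Xv) * Gcheck Xv Zv (n-k) (w + (k:F3)*Zv) := by
    rw [Gcheck_spec n hn2 w, mul_comm, div_mul_cancel₀ _ hw.ne0]
  have hrw : ∀ k ∈ Finset.Icc 1 (n-1),
      (1 - w) * ((Gcheck Xv Zv k (w+Xv) - Gcheck Xv Zv k w) * Gcheck Xv Zv (n-k) (w + (k:F3)*Zv))
        = (k:F3) * Xv * Gcheck Xv Zv k (w+Xv) * Gcheck Xv Zv (n-k) (w + (k:F3)*Zv)
          + ∑ i ∈ Finset.Icc 1 (k-1), Gcheck Xv Zv i (w+Xv) *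
              (Gcheck Xv Zv (k-i) (w + (i:F3)*Zv + Xv) - Gcheck Xv Zv (k-i) (w + (i:F3)*Zv))
              * Gcheck Xv Zv (n-k) (w + (k:F3)*Zv) := by
    intro k hk
    obtain ⟨hk1, hk2⟩ := Finset.mem_Icc.mp hk
    have h := hC k hk1 (by omega) w hw
    calc (1 - w) * ((Gcheck Xv Zv k (w+Xv) - Gcheck Xv Zv k w)
            * Gcheck Xv Zv (n-k) (w + (k:F3)*Zv))
        = ((1 - w) * (Gcheck Xv Zv k (w+Xv) - Gcheck Xv Zv k w))
            * Gcheck Xv Zv (n-k) (w + (k:F3)*Zv) := by ring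
      _ = _ := by
          rw [h, add_mul, Finset.sum_mul]
  rw [Finset.mul_sum, Finset.sum_congr rfl hrw, Finset.sum_add_distrib]
  have hre : ∑ k ∈ Finset.Icc 1 (n-1), ∑ i ∈ Finset.Icc 1 (k-1),
        Gcheck Xv Zv i (w+Xv) *
          (Gcheck Xv Zv (k-i) (w + (i:F3)*Zv + Xv) - Gcheck Xv Zv (k-i) (w + (i:F3)*Zv))
          * Gcheck Xv Zv (n-k) (w + (k:F3)*Zv)
      = ∑ i ∈ Finset.Icc 1 (n-1), ∑ j ∈ Finset.Icc 1 (n-1-i),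
        Gcheck Xv Zv i (w+Xv) *
          (Gcheck Xv Zv j (w + (i:F3)*Zv + Xv) - Gcheck Xv Zv j (w + (i:F3)*Zv))
          * Gcheck Xv Zv (n-(i+j)) (w + ((i+j:ℕ):F3)*Zv) := by
    rw [Finset.sum_sigma', Finset.sum_sigma']
    refine Finset.sum_nbij' (fun p => (⟨p.2, p.1 - p.2⟩ : Σ _ : ℕ, ℕ))
      (fun p => (⟨p.1 + p.2, p.1⟩ : Σ _ : ℕ, ℕ)) ?_ ?_ ?_ ?_ ?_
    · rintro ⟨k, i⟩ hp
      simp only [Finset.mem_sigma, Finset.mem_Icc] at hp ⊢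
      omega
    · rintro ⟨i, j⟩ hp
      simp only [Finset.mem_sigma, Finset.mem_Icc] at hp ⊢
      omega
    · rintro ⟨k, i⟩ hp
      simp only [Finset.mem_sigma, Finset.mem_Icc] at hp
      simp only [Sigma.mk.inj_iff, heq_eq_eq]
      exact ⟨by omega, trivial⟩
    · rintro ⟨i, j⟩ hp
      simp only [Finset.mem_sigma, Finset.mem_Icc] at hp
      simp only [Sigma.mk.inj_iff, heq_eq_eq]
      exact ⟨trivial, by omega⟩
    · rintro ⟨k, i⟩ hp
      simp only [Finset.mem_sigma, Finset.mem_Icc] at hp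
      have h1 : i + (k - i) = k := by omega
      simp only [h1]
  rw [hre]
  have hinner : ∀ i ∈ Finset.Icc 1 (n-1),
      ∑ j ∈ Finset.Icc 1 (n-1-i),
        Gcheck Xv Zv i (w+Xv) *
          (Gcheck Xv Zv j (w + (i:F3)*Zv + Xv) - Gcheck Xv Zv j (w + (i:F3)*Zv))
          * Gcheck Xv Zv (n-(i+j)) (w + ((i+j:ℕ):F3)*Zv)
        = ((n-i-1:ℕ):F3) * Xv * Gcheck Xv Zv i (w+Xv)
            * Gcheck Xv Zv (n-i) (w + (i:F3)*Zv) := by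
    intro i hi
    obtain ⟨hi1, hi2⟩ := Finset.mem_Icc.mp hi
    have hT := IH (n-i) (by omega) (w + (i:F3)*Zv) (hw.addZ i)
    have hidx : n - 1 - i = n - i - 1 := by omega
    calc ∑ j ∈ Finset.Icc 1 (n-1-i),
          Gcheck Xv Zv i (w+Xv) *
            (Gcheck Xv Zv j (w + (i:F3)*Zv + Xv) - Gcheck Xv Zv j (w + (i:F3)*Zv))
            * Gcheck Xv Zv (n-(i+j)) (w + ((i+j:ℕ):F3)*Zv)
        = Gcheck Xv Zv i (w+Xv) * ∑ j ∈ Finset.Icc 1 (n-i-1),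
            (Gcheck Xv Zv j ((w + (i:F3)*Zv) + Xv) - Gcheck Xv Zv j (w + (i:F3)*Zv))
            * Gcheck Xv Zv ((n-i)-j) ((w + (i:F3)*Zv) + (j:F3)*Zv) := by
          rw [Finset.mul_sum, hidx]
          refine Finset.sum_congr rfl (fun j hj => ?_)
          obtain ⟨hj1, hj2⟩ := Finset.mem_Icc.mp hj
          have h1 : n - (i+j) = n - i - j := by omega
          have h2 : w + ((i+j:ℕ):F3)*Zv = (w + (i:F3)*Zv) + (j:F3)*Zv := by
            push_cast; ring
          rw [h1, h2]
          ring
      _ = Gcheck Xv Zv i (w+Xv)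
            * (((n-i-1:ℕ):F3) * Xv * Gcheck Xv Zv (n-i) (w + (i:F3)*Zv)) := by rw [hT]
      _ = _ := by ring
  rw [Finset.sum_congr rfl hinner]
  have hmerge : ∀ k ∈ Finset.Icc 1 (n-1),
      (k:F3) * Xv * Gcheck Xv Zv k (w+Xv) * Gcheck Xv Zv (n-k) (w + (k:F3)*Zv)
        + ((n-k-1:ℕ):F3) * Xv * Gcheck Xv Zv k (w+Xv) * Gcheck Xv Zv (n-k) (w + (k:F3)*Zv)
      = ((n-1:ℕ):F3) * Xv
          * (Gcheck Xv Zv k (w+Xv) * Gcheck Xv Zv (n-k) (w + (k:F3)*Zv)) := by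
    intro k hk
    obtain ⟨hk1, hk2⟩ := Finset.mem_Icc.mp hk
    have hc : (k:F3) + ((n-k-1:ℕ):F3) = ((n-1:ℕ):F3) := by
      have h1 : k + (n-k-1) = n-1 := by omega
      calc (k:F3) + ((n-k-1:ℕ):F3) = ((k + (n-k-1) : ℕ) : F3) := by push_cast; ring
        _ = _ := by rw [h1]
    linear_combination Gcheck Xv Zv k (w+Xv) * Gcheck Xv Zv (n-k) (w + (k:F3)*Zv) * Xv * hc
  rw [← Finset.sum_add_distrib, Finset.sum_congr rfl hmerge, ← Finset.mul_sum, ← hspec]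
  ring



lemma R2full (n : ℕ) (hn : 2 ≤ n) (w : F3) (hw : GoodW w) :
    (1 - w - ((n-1:ℕ):F3) * Xv) * Gcheck Xv Zv n w
      = ∑ k ∈ Finset.Icc 1 (n-1), Gcheck Xv Zv k w * Gcheck Xv Zv (n-k) (w + (k:F3)*Zv) := by
  have h1 : (1 - w) * Gcheck Xv Zv n w
      = ∑ k ∈ Finset.Icc 1 (n-1),
          Gcheck Xv Zv k (w+Xv) * Gcheck Xv Zv (n-k) (w + (k:F3)*Zv) := by
    rw [Gcheck_spec n hn w, mul_comm, div_mul_cancel₀ _ hw.ne0]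
  have hT := keyT n w hw
  have h2 : ∑ k ∈ Finset.Icc 1 (n-1), Gcheck Xv Zv k w * Gcheck Xv Zv (n-k) (w + (k:F3)*Zv)
      = (∑ k ∈ Finset.Icc 1 (n-1),
          Gcheck Xv Zv k (w+Xv) * Gcheck Xv Zv (n-k) (w + (k:F3)*Zv))
        - ∑ k ∈ Finset.Icc 1 (n-1),
          (Gcheck Xv Zv k (w+Xv) - Gcheck Xv Zv k w) * Gcheck Xv Zv (n-k) (w + (k:F3)*Zv) := by
    rw [← Finset.sum_sub_distrib]
    exact Finset.sum_congr rfl (fun k _ => by ring)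
  rw [h2, ← h1, hT]
  ring

/-- For all `n ≥ 2`, `Ǧ` satisfies the recursion of `Ĝ`:
`Ǧ_n(w,x,z) = ∑_{k=1}^{n-1} Ǧ_k(w,x,z) Ǧ_{n-k}(w+kz,x,z) / (1-w-(n-1)x)`. -/
theorem Gcheck_satisfies_Ghat_recursion (n : ℕ) (hn : 2 ≤ n) :
    Gcheck Xv Zv n W = ∑ k ∈ Finset.Icc 1 (n - 1),
      Gcheck Xv Zv k W * Gcheck Xv Zv (n - k) (W + (k : F3) * Zv) /
        (1 - W - ((n - 1 : ℕ) : F3) * Xv) := by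
  have hne : (1:F3) - W - ((n-1:ℕ):F3) * Xv ≠ 0 := goodW_W.ne (n-1)
  have h := R2full n hn W goodW_W
  rw [show (∑ k ∈ Finset.Icc 1 (n - 1),
      Gcheck Xv Zv k W * Gcheck Xv Zv (n - k) (W + (k : F3) * Zv) /
        (1 - W - ((n - 1 : ℕ) : F3) * Xv))
    = (∑ k ∈ Finset.Icc 1 (n - 1),
      Gcheck Xv Zv k W * Gcheck Xv Zv (n - k) (W + (k : F3) * Zv)) /
        (1 - W - ((n - 1 : ℕ) : F3) * Xv) from (Finset.sum_div _ _ _).symm]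
  rw [← h, mul_div_cancel_left₀ _ hne]


end
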